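/- Let a > 0, b ∈ ℝ, c ≥ 0, set α₊ := (b+c)/(2√a), α₋ := (c−b)/(2√a) and I(w) := ∫_{w}^{∞} exp(−t²) dt, and let r ∈ [0,1]. Suppose z ∈ ℝ satisfies I(z) = r · [ I(α₊) + exp(−b·c/a) · I(α₋) ], and set y := (α₊ − z)/√a. If y ≤ 0, then ∫_{−∞}^{y} exp(−a x² + b x − c|x|) dx = r · ∫_{−∞}^{∞} exp(−a x² + b x − c|x|) dx; that is, y inverts the cumulative distribution function of the density p(x) ∝ exp(−a x² + b x − c|x|) at the level r. -/

import Mathlib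

open MeasureTheory Set Real

lemma shift_Ioi (f : ℝ → ℝ) (d c : ℝ) :
    (∫ t in Set.Ioi c, f (t + d)) = ∫ s in Set.Ioi (c + d), f s := by
  have A : MeasurableEmbedding fun x : ℝ => x + d :=
    (Homeomorph.addRight d).isClosedEmbedding.measurableEmbedding
  have h := A.setIntegral_map (μ := volume) f (Set.Ioi (c + d))
  rw [MeasureTheory.map_add_right_eq_self volume d] at h
  rw [h]
  congr 1
  ext x
  simp [Set.mem_preimage, Set.mem_Ioi]

lemma aff_Ioi (f : ℝ → ℝ) {k : ℝ} (hk : 0 < k) (d u : ℝ) :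
    (∫ x in Set.Ioi u, f (k * x + d)) = k⁻¹ * ∫ t in Set.Ioi (k * u + d), f t := by
  have h1 : (∫ x in Set.Ioi u, (fun y => f (y + d)) (k * x)) =
      k⁻¹ • ∫ y in Set.Ioi (k * u), (fun y => f (y + d)) y :=
    MeasureTheory.integral_comp_mul_left_Ioi (fun y => f (y + d)) u hk
  simp only [smul_eq_mul] at h1
  rw [h1, shift_Ioi]

lemma aff_Iic (f : ℝ → ℝ) {k : ℝ} (hk : 0 < k) (d u : ℝ) :
    (∫ x in Set.Iic u, f (d - k * x)) = k⁻¹ * ∫ t in Set.Ici (d - k * u), f t := by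
  have h1 := integral_comp_neg_Iic u (fun y => f (k * y + d))
  have h0 : (∫ x in Set.Iic u, f (d - k * x)) =
      ∫ x in Set.Iic u, (fun y => f (k * y + d)) (-x) := by
    congr 1; ext x; ring_nf
  rw [h0, h1, aff_Ioi f hk d (-u), integral_Ici_eq_integral_Ioi]
  ring_nf

/-- Correctness of the explicit cdf inversion on the negative half-line:
if `I(z) = r·[I(α₊) + exp(−bc/a)·I(α₋)]` with `I(w) = ∫_w^∞ e^{−t²} dt`,
`α₊ = (b+c)/(2√a)`, `α₋ = (c−b)/(2√a)`, and `y = (α₊ − z)/√a ≤ 0`, then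
`∫_{−∞}^{y} e^{−ax²+bx−c|x|} dx = r · ∫_{−∞}^{∞} e^{−ax²+bx−c|x|} dx`. -/
theorem stmt_9 (a b c r z : ℝ) (ha : 0 < a) (hc : 0 ≤ c) (hr0 : 0 ≤ r) (hr1 : r ≤ 1)
    (hz : (∫ t in Set.Ici z, Real.exp (-t ^ 2))
      = r * ((∫ t in Set.Ici ((b + c) / (2 * Real.sqrt a)), Real.exp (-t ^ 2))
          + Real.exp (-(b * c) / a)
            * ∫ t in Set.Ici ((c - b) / (2 * Real.sqrt a)), Real.exp (-t ^ 2)))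
    (hy : ((b + c) / (2 * Real.sqrt a) - z) / Real.sqrt a ≤ 0) :
    (∫ x in Set.Iic (((b + c) / (2 * Real.sqrt a) - z) / Real.sqrt a),
        Real.exp (-a * x ^ 2 + b * x - c * |x|))
      = r * ∫ x : ℝ, Real.exp (-a * x ^ 2 + b * x - c * |x|) := by
  have hs0 : 0 < Real.sqrt a := Real.sqrt_pos.mpr ha
  set s := Real.sqrt a with hsdef
  have hss : s ^ 2 = a := Real.sq_sqrt ha.le
  set A := (b + c) / (2 * s) with hA
  set B := (c - b) / (2 * s) with hB
  set y := (A - z) / s with hy'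
  have hzA : A - s * y = z := by
    rw [hy']; field_simp; ring
  -- pointwise identities
  have key1 : ∀ x : ℝ, x ≤ 0 → Real.exp (-a * x ^ 2 + b * x - c * |x|)
      = Real.exp (A ^ 2) * Real.exp (-(A - s * x) ^ 2) := by
    intro x hx
    rw [abs_of_nonpos hx, ← Real.exp_add]
    congr 1
    rw [hA, ← hss]
    field_simp
    ring
  have key2 : ∀ x : ℝ, 0 ≤ x → Real.exp (-a * x ^ 2 + b * x - c * |x|)
      = Real.exp (A ^ 2) * (Real.exp (-(b * c) / a) * Real.exp (-(s * x + B) ^ 2)) := by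
    intro x hx
    rw [abs_of_nonneg hx, ← Real.exp_add, ← Real.exp_add]
    congr 1
    rw [hA, hB, ← hss]
    field_simp
    ring
  -- integrability of the Gaussian pieces
  have hg1 : Integrable (fun x : ℝ => Real.exp (-(A - s * x) ^ 2)) := by
    have h := (integrable_exp_neg_mul_sq ha).comp_sub_right (A / s)
    have heq : (fun x : ℝ => Real.exp (-a * (x - A / s) ^ 2))
        = fun x : ℝ => Real.exp (-(A - s * x) ^ 2) := by
      funext x; congr 1; rw [← hss]; field_simp; ring
    rwa [heq] at h
  have hg2 : Integrable (fun x : ℝ => Real.exp (-(s * x + B) ^ 2)) := by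
    have h := (integrable_exp_neg_mul_sq ha).comp_add_right (B / s)
    have heq : (fun x : ℝ => Real.exp (-a * (x + B / s) ^ 2))
        = fun x : ℝ => Real.exp (-(s * x + B) ^ 2) := by
      funext x; congr 1; rw [← hss]; field_simp
    rwa [heq] at h
  have hi1 : IntegrableOn (fun x : ℝ => Real.exp (-a * x ^ 2 + b * x - c * |x|))
      (Set.Iic (0 : ℝ)) :=
    ((hg1.const_mul (Real.exp (A ^ 2))).integrableOn).congr_fun
      (fun x hx => (key1 x hx).symm) measurableSet_Iic
  have hi2 : IntegrableOn (fun x : ℝ => Real.exp (-a * x ^ 2 + b * x - c * |x|))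
      (Set.Ioi (0 : ℝ)) :=
    (((hg2.const_mul (Real.exp (-(b * c) / a))).const_mul
        (Real.exp (A ^ 2))).integrableOn).congr_fun
      (fun x hx => (key2 x (le_of_lt hx)).symm) measurableSet_Ioi
  -- split the total integral
  have htot : (∫ x : ℝ, Real.exp (-a * x ^ 2 + b * x - c * |x|))
      = (∫ x in Set.Iic (0 : ℝ), Real.exp (-a * x ^ 2 + b * x - c * |x|))
        + ∫ x in Set.Ioi (0 : ℝ), Real.exp (-a * x ^ 2 + b * x - c * |x|) :=
    (intervalIntegral.integral_Iic_add_Ioi hi1 hi2).symm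
  -- evaluate the three pieces
  have e1 : (∫ x in Set.Iic (0 : ℝ), Real.exp (-a * x ^ 2 + b * x - c * |x|))
      = Real.exp (A ^ 2) * (s⁻¹ * ∫ t in Set.Ici A, Real.exp (-t ^ 2)) := by
    rw [setIntegral_congr_fun measurableSet_Iic (fun x hx => key1 x hx),
      integral_const_mul, aff_Iic (fun t => Real.exp (-t ^ 2)) hs0 A 0]
    simp
  have e2 : (∫ x in Set.Ioi (0 : ℝ), Real.exp (-a * x ^ 2 + b * x - c * |x|))
      = Real.exp (A ^ 2) * (Real.exp (-(b * c) / a)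
          * (s⁻¹ * ∫ t in Set.Ici B, Real.exp (-t ^ 2))) := by
    rw [setIntegral_congr_fun measurableSet_Ioi (fun x hx => key2 x (le_of_lt hx)),
      integral_const_mul, integral_const_mul, aff_Ioi (fun t => Real.exp (-t ^ 2)) hs0 B 0,
      integral_Ici_eq_integral_Ioi]
    simp
  have e0 : (∫ x in Set.Iic y, Real.exp (-a * x ^ 2 + b * x - c * |x|))
      = Real.exp (A ^ 2) * (s⁻¹ * ∫ t in Set.Ici z, Real.exp (-t ^ 2)) := by
    rw [setIntegral_congr_fun measurableSet_Iic (fun x hx => key1 x (le_trans hx hy)),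
      integral_const_mul, aff_Iic (fun t => Real.exp (-t ^ 2)) hs0 A y, hzA]
  rw [e0, htot, e1, e2, hz]
  ring
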